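/- Let G be a group and let A, B be finite subsets of G with |B| ≥ 2. Then |A·B| + |A·₂B| ≥ 2|A|, where A·B is the product set and A·₂B is the set of elements with at least two representations as a product ab with (a,b) ∈ A × B. -/
import Mathlib


open Pointwise

theorem stmt_1 {G : Type*} [Group G] [DecidableEq G] (A B : Finset G)
    (hB : 2 ≤ B.card) :
    2 * A.card ≤
      (A * B).card +
        ((A * B).filter
          (fun x => 2 ≤ ((A ×ˢ B).filter (fun p => p.1 * p.2 = x)).card)).card := by
  obtain ⟨b₁, hb₁, b₂, hb₂, hne⟩ := Finset.one_lt_card.mp hB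
  set S₁ := A.image (· * b₁) with hS₁
  set S₂ := A.image (· * b₂) with hS₂
  have hc₁ : S₁.card = A.card := Finset.card_image_of_injective _ (mul_left_injective b₁)
  have hc₂ : S₂.card = A.card := Finset.card_image_of_injective _ (mul_left_injective b₂)
  have hsub : S₁ ∪ S₂ ⊆ A * B := by
    intro x hx
    rcases Finset.mem_union.mp hx with hx | hx <;>
      obtain ⟨a, ha, rfl⟩ := Finset.mem_image.mp hx
    · exact Finset.mul_mem_mul ha hb₁
    · exact Finset.mul_mem_mul ha hb₂
  have hsub2 : S₁ ∩ S₂ ⊆ (A * B).filter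
      (fun x => 2 ≤ ((A ×ˢ B).filter (fun p => p.1 * p.2 = x)).card) := by
    intro x hx
    obtain ⟨hx1, hx2⟩ := Finset.mem_inter.mp hx
    obtain ⟨a, ha, rfl⟩ := Finset.mem_image.mp hx1
    obtain ⟨a', ha', heq⟩ := Finset.mem_image.mp hx2
    refine Finset.mem_filter.mpr ⟨Finset.mul_mem_mul ha hb₁, ?_⟩
    refine Finset.one_lt_card.mpr ⟨(a, b₁), ?_, (a', b₂), ?_, ?_⟩
    · exact Finset.mem_filter.mpr ⟨Finset.mem_product.mpr ⟨ha, hb₁⟩, rfl⟩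
    · exact Finset.mem_filter.mpr ⟨Finset.mem_product.mpr ⟨ha', hb₂⟩, heq⟩
    · intro h
      exact hne (congrArg Prod.snd h)
  calc 2 * A.card = S₁.card + S₂.card := by rw [hc₁, hc₂]; ring
    _ = (S₁ ∪ S₂).card + (S₁ ∩ S₂).card := (Finset.card_union_add_card_inter _ _).symm
    _ ≤ _ := add_le_add (Finset.card_le_card hsub) (Finset.card_le_card hsub2)
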